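/- For every t ∈ ℝ, g₂(t) = b⁻(a(b⁻(a⁻(b(b(t)))))), where a(t) = t + 1 and a⁻(t) = t − 1; that is, the piecewise formula defining g₂ equals the composition b b a⁻¹ b⁻¹ a b⁻¹ (maps applied left to right) of the generators of the Lodha–Moore group. -/

import Mathlib

/-- The generator `a` of the Lodha–Moore group: translation by 1. -/
noncomputable def LMa (t : ℝ) : ℝ := t + 1

/-- The inverse of `LMa`: translation by -1. -/
noncomputable def LMaInv (t : ℝ) : ℝ := t - 1

/-- The generator `b` of the Lodha–Moore group. -/
noncomputable def LMb (t : ℝ) : ℝ :=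
  if t ≤ 0 then t
  else if t ≤ 1 / 2 then t / (1 - t)
  else if t ≤ 1 then (3 * t - 1) / t
  else t + 1

/-- The inverse of the generator `b` of the Lodha–Moore group. -/
noncomputable def LMbInv (t : ℝ) : ℝ :=
  if t ≤ 0 then t
  else if t ≤ 1 then t / (t + 1)
  else if t ≤ 2 then 1 / (3 - t)
  else t - 1

/-- The element `g₂ = b b a⁻¹ b⁻¹ a b⁻¹` (maps applied left to right)
as a piecewise fractional linear map. -/
noncomputable def g₂ (t : ℝ) : ℝ :=
  if t ≤ 0 then t
  else if t ≤ 1 / 3 then t / (1 - t)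
  else if t ≤ 1 / 2 then (4 * t - 1) / (5 * t - 1)
  else if t ≤ 1 then 1 / (2 - t)
  else t

lemma LMb1 {t : ℝ} (h : t ≤ 0) : LMb t = t := by rw [LMb, if_pos h]

lemma LMb2 {t : ℝ} (h0 : 0 < t) (h1 : t ≤ 1 / 2) : LMb t = t / (1 - t) := by
  rw [LMb, if_neg (not_le.2 h0), if_pos h1]

lemma LMb3 {t : ℝ} (h0 : 1 / 2 < t) (h1 : t ≤ 1) : LMb t = (3 * t - 1) / t := by
  rw [LMb, if_neg (by linarith), if_neg (not_le.2 h0), if_pos h1]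

lemma LMb4 {t : ℝ} (h : 1 < t) : LMb t = t + 1 := by
  rw [LMb, if_neg (by linarith), if_neg (by linarith), if_neg (not_le.2 h)]

lemma LMbInv1 {t : ℝ} (h : t ≤ 0) : LMbInv t = t := by rw [LMbInv, if_pos h]

lemma LMbInv2 {t : ℝ} (h0 : 0 < t) (h1 : t ≤ 1) : LMbInv t = t / (t + 1) := by
  rw [LMbInv, if_neg (not_le.2 h0), if_pos h1]

lemma LMbInv3 {t : ℝ} (h0 : 1 < t) (h1 : t ≤ 2) : LMbInv t = 1 / (3 - t) := by
  rw [LMbInv, if_neg (by linarith), if_neg (not_le.2 h0), if_pos h1]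

lemma LMbInv4 {t : ℝ} (h : 2 < t) : LMbInv t = t - 1 := by
  rw [LMbInv, if_neg (by linarith), if_neg (by linarith), if_neg (not_le.2 h)]

/-- The piecewise formula defining `g₂` agrees with the composition
`b b a⁻¹ b⁻¹ a b⁻¹` of the generators of the Lodha–Moore group. -/
theorem g₂_eq_comp (t : ℝ) :
    g₂ t = LMbInv (LMa (LMbInv (LMaInv (LMb (LMb t))))) := by
  rcases le_or_gt t 0 with h0 | h0
  · rw [LMb1 h0, LMb1 h0]
    simp only [LMaInv]
    rw [LMbInv1 (show t - 1 ≤ 0 by linarith)]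
    simp only [LMa]
    rw [show t - 1 + 1 = t from by ring, LMbInv1 h0, g₂, if_pos h0]
  rcases le_or_gt t (1 / 3) with h3 | h3
  · -- 0 < t ≤ 1/3
    have d1 : (0:ℝ) < 1 - t := by linarith
    have d2 : (0:ℝ) < 1 - 2 * t := by linarith
    have d1' : (1:ℝ) - t ≠ 0 := ne_of_gt d1
    have d2' : (1:ℝ) - 2 * t ≠ 0 := ne_of_gt d2
    rw [LMb2 h0 (by linarith)]
    have hu0 : 0 < t / (1 - t) := div_pos h0 d1
    have hu1 : t / (1 - t) ≤ 1 / 2 := by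
      rw [div_le_div_iff₀ d1 two_pos]; linarith
    rw [LMb2 hu0 hu1]
    have e1 : t / (1 - t) / (1 - t / (1 - t)) = t / (1 - 2 * t) := by
      rw [show (1:ℝ) - t / (1 - t) = (1 - 2 * t) / (1 - t) from by field_simp <;> ring,
        div_div_div_cancel_right₀ d1']
    rw [e1]
    simp only [LMaInv]
    have hle : t / (1 - 2 * t) ≤ 1 := by
      rw [div_le_one d2]; linarith
    rw [LMbInv1 (show t / (1 - 2 * t) - 1 ≤ 0 by linarith)]
    simp only [LMa]
    rw [show t / (1 - 2 * t) - 1 + 1 = t / (1 - 2 * t) from by ring]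
    rw [LMbInv2 (div_pos h0 d2) hle]
    have e2 : t / (1 - 2 * t) / (t / (1 - 2 * t) + 1) = t / (1 - t) := by
      rw [show t / (1 - 2 * t) + 1 = (1 - t) / (1 - 2 * t) from by
        rw [eq_div_iff d2', add_mul, div_mul_cancel₀ _ d2']; ring,
        div_div_div_cancel_right₀ d2']
    rw [e2, g₂, if_neg (not_le.2 h0), if_pos h3]
  rcases le_or_gt t (1 / 2) with h2 | h2
  · -- 1/3 < t ≤ 1/2
    have d1 : (0:ℝ) < 1 - t := by linarith
    have d3 : (0:ℝ) < 3 * t - 1 := by linarith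
    have d4 : (0:ℝ) < 4 * t - 1 := by linarith
    have d5 : (0:ℝ) < 5 * t - 1 := by linarith
    have d1' : (1:ℝ) - t ≠ 0 := ne_of_gt d1
    have h0' : t ≠ 0 := ne_of_gt h0
    have d4' : (4:ℝ) * t - 1 ≠ 0 := ne_of_gt d4
    rw [LMb2 h0 h2]
    have hu0 : 1 / 2 < t / (1 - t) := by
      rw [div_lt_div_iff₀ two_pos d1]; linarith
    have hu1 : t / (1 - t) ≤ 1 := by rw [div_le_one d1]; linarith
    rw [LMb3 hu0 hu1]
    have e1 : (3 * (t / (1 - t)) - 1) / (t / (1 - t)) = (4 * t - 1) / t := by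
      rw [show 3 * (t / (1 - t)) - 1 = (4 * t - 1) / (1 - t) from by field_simp <;> ring,
        div_div_div_cancel_right₀ d1']
    rw [e1]
    simp only [LMaInv]
    rw [show (4 * t - 1) / t - 1 = (3 * t - 1) / t from by field_simp <;> ring]
    rw [LMbInv2 (div_pos d3 h0) (by rw [div_le_one h0]; linarith)]
    rw [show (3 * t - 1) / t / ((3 * t - 1) / t + 1) = (3 * t - 1) / (4 * t - 1) from by
      rw [show (3 * t - 1) / t + 1 = (4 * t - 1) / t from by field_simp <;> ring,
        div_div_div_cancel_right₀ h0']]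
    simp only [LMa]
    have hx0 : 1 < (3 * t - 1) / (4 * t - 1) + 1 := by
      have := div_pos d3 d4; linarith
    have hx1 : (3 * t - 1) / (4 * t - 1) + 1 ≤ 2 := by
      have : (3 * t - 1) / (4 * t - 1) ≤ 1 := by rw [div_le_one d4]; linarith
      linarith
    rw [LMbInv3 hx0 hx1]
    rw [show (3:ℝ) - ((3 * t - 1) / (4 * t - 1) + 1) = (5 * t - 1) / (4 * t - 1) from by
      rw [eq_div_iff d4', sub_mul, add_mul, div_mul_cancel₀ _ d4']; ring]
    rw [one_div_div]
    rw [g₂, if_neg (not_le.2 h0), if_neg (not_le.2 h3), if_pos h2]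
  rcases le_or_gt t 1 with h1 | h1
  · -- 1/2 < t ≤ 1
    have d3 : (0:ℝ) < 3 * t - 1 := by linarith
    have h0' : t ≠ 0 := ne_of_gt h0
    rw [LMb3 h2 h1]
    have hu1 : 1 < (3 * t - 1) / t := by
      rw [lt_div_iff₀ h0]; linarith
    rw [LMb4 hu1]
    simp only [LMaInv]
    rw [show (3 * t - 1) / t + 1 - 1 = (3 * t - 1) / t from by ring]
    have hu2 : (3 * t - 1) / t ≤ 2 := by rw [div_le_iff₀ h0]; linarith
    rw [LMbInv3 hu1 hu2]
    rw [show (3:ℝ) - (3 * t - 1) / t = 1 / t from by field_simp <;> ring]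
    rw [one_div_one_div]
    simp only [LMa]
    rw [LMbInv3 (show (1:ℝ) < t + 1 by linarith) (show t + 1 ≤ 2 by linarith)]
    rw [show (3:ℝ) - (t + 1) = 2 - t from by ring]
    rw [g₂, if_neg (not_le.2 h0), if_neg (not_le.2 h3), if_neg (not_le.2 h2), if_pos h1]
  · -- 1 < t
    rw [LMb4 h1, LMb4 (show (1:ℝ) < t + 1 by linarith)]
    simp only [LMaInv]
    rw [show t + 1 + 1 - 1 = t + 1 from by ring]
    rw [LMbInv4 (show (2:ℝ) < t + 1 by linarith)]
    simp only [LMa]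
    rw [show t + 1 - 1 + 1 = t + 1 from by ring]
    rw [LMbInv4 (show (2:ℝ) < t + 1 by linarith)]
    rw [show t + 1 - 1 = t from by ring]
    rw [g₂, if_neg (not_le.2 h0), if_neg (not_le.2 h3), if_neg (not_le.2 h2),
      if_neg (not_le.2 h1)]
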